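/- Suppose b < 0, a < 0, c > 0, α ∈ (π/2, π), 0 < θ₀ < min{2α - π, π/4}, and set C = √(a²+c²)·sin(-θ₀/2 + α). If |b| < min{√(a²+c²), C}, and -θ₀ < θ < 2(π - γ₃ - α) where γ₃ = arcsin(|b|/√(a²+c²)), then f''(θ) > 0. -/

import Mathlib

open Real

theorem stmt_11 (a b c α θ₀ θ C : ℝ)
    (hb : b < 0) (ha : a < 0) (hc : c > 0)
    (hα : α ∈ Set.Ioo (π / 2) π)
    (hsin : Real.sin α = c / Real.sqrt (a ^ 2 + c ^ 2))
    (hcos : Real.cos α = a / Real.sqrt (a ^ 2 + c ^ 2))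
    (hθ₀ : 0 < θ₀ ∧ θ₀ < min (2 * α - π) (π / 4))
    (hC : C = Real.sqrt (a ^ 2 + c ^ 2) * Real.sin (-θ₀ / 2 + α))
    (hbsmall : |b| < min (Real.sqrt (a ^ 2 + c ^ 2)) C)
    (γ₃ : ℝ) (hγ₃ : γ₃ = Real.arcsin (|b| / Real.sqrt (a ^ 2 + c ^ 2)))
    (hθ : -θ₀ < θ ∧ θ < 2 * (π - γ₃ - α))
    (f : ℝ → ℝ)
    (hf : ∀ x : ℝ, f x = Real.sqrt (a ^ 2 + b ^ 2 + c ^ 2 +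
        2 * b * Real.sqrt (a ^ 2 + c ^ 2) * Real.sin (x / 2 + α))) :
    0 < deriv (deriv f) θ := by
  obtain ⟨hα1, hα2⟩ := hα
  obtain ⟨hθ₀pos, hθ₀lt⟩ := hθ₀
  obtain ⟨hθ1, hθ2⟩ := hθ
  have hab : |b| = -b := abs_of_neg hb
  rw [hab] at hbsmall hγ₃
  set s := Real.sqrt (a ^ 2 + c ^ 2) with hs_def
  have hs : 0 < s := Real.sqrt_pos.mpr (by positivity)
  have hs2 : s ^ 2 = a ^ 2 + c ^ 2 := Real.sq_sqrt (by positivity)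
  have hbs : -b < s := lt_of_lt_of_le hbsmall (min_le_left _ _)
  have hfe : f = fun x => Real.sqrt (a ^ 2 + b ^ 2 + c ^ 2 +
      2 * b * s * Real.sin (x / 2 + α)) := funext hf
  subst hfe
  -- positivity of inner function
  have gpos : ∀ x : ℝ, 0 < a ^ 2 + b ^ 2 + c ^ 2 + 2 * b * s * Real.sin (x / 2 + α) := by
    intro x
    have h2 := Real.sin_le_one (x / 2 + α)
    nlinarith [mul_pos hs (show (0 : ℝ) < s + b by linarith),
      mul_nonneg (mul_nonneg (le_of_lt (neg_pos.mpr hb)) hs.le)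
        (sub_nonneg.mpr h2)]
  have hinner : ∀ x : ℝ, HasDerivAt (fun y : ℝ => y / 2 + α) (1 / 2) x := by
    intro x
    simpa using ((hasDerivAt_id x).div_const 2).add_const α
  have hg : ∀ x : ℝ, HasDerivAt
      (fun y => a ^ 2 + b ^ 2 + c ^ 2 + 2 * b * s * Real.sin (y / 2 + α))
      (2 * b * s * (Real.cos (x / 2 + α) * (1 / 2))) x := by
    intro x
    exact (((Real.hasDerivAt_sin (x / 2 + α)).comp x (hinner x)).const_mul
      (2 * b * s)).const_add (a ^ 2 + b ^ 2 + c ^ 2)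
  have hdf : deriv (fun x => Real.sqrt (a ^ 2 + b ^ 2 + c ^ 2 +
      2 * b * s * Real.sin (x / 2 + α))) = fun x =>
      (2 * b * s * (Real.cos (x / 2 + α) * (1 / 2))) /
        (2 * Real.sqrt (a ^ 2 + b ^ 2 + c ^ 2 + 2 * b * s * Real.sin (x / 2 + α))) := by
    funext x
    exact ((hg x).sqrt (ne_of_gt (gpos x))).deriv
  rw [hdf]
  -- second derivative
  have hnum : HasDerivAt (fun x => 2 * b * s * (Real.cos (x / 2 + α) * (1 / 2)))
      (2 * b * s * (-Real.sin (θ / 2 + α) * (1 / 2) * (1 / 2))) θ := by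
    exact ((((Real.hasDerivAt_cos (θ / 2 + α)).comp θ (hinner θ)).mul_const
      (1 / 2)).const_mul (2 * b * s))
  have hden : HasDerivAt (fun x => 2 * Real.sqrt (a ^ 2 + b ^ 2 + c ^ 2 +
      2 * b * s * Real.sin (x / 2 + α)))
      (2 * ((2 * b * s * (Real.cos (θ / 2 + α) * (1 / 2))) /
        (2 * Real.sqrt (a ^ 2 + b ^ 2 + c ^ 2 + 2 * b * s * Real.sin (θ / 2 + α))))) θ :=
    (((hg θ).sqrt (ne_of_gt (gpos θ))).const_mul 2)
  have hrpos : 0 < Real.sqrt (a ^ 2 + b ^ 2 + c ^ 2 + 2 * b * s * Real.sin (θ / 2 + α)) :=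
    Real.sqrt_pos.mpr (gpos θ)
  have hdne : 2 * Real.sqrt (a ^ 2 + b ^ 2 + c ^ 2 + 2 * b * s * Real.sin (θ / 2 + α)) ≠ 0 := by
    positivity
  erw [(hnum.div hden hdne).deriv]
  set u := Real.sin (θ / 2 + α) with hu_def
  set v := Real.cos (θ / 2 + α) with hv_def
  set r := Real.sqrt (a ^ 2 + b ^ 2 + c ^ 2 + 2 * b * s * u) with hr_def
  have hr2 : r ^ 2 = a ^ 2 + b ^ 2 + c ^ 2 + 2 * b * s * u := Real.sq_sqrt (gpos θ).le
  have huv : u ^ 2 + v ^ 2 = 1 := Real.sin_sq_add_cos_sq _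
  -- key angle inequality : s * u + b > 0
  have htlt1 : -b / s < 1 := (div_lt_one hs).mpr hbs
  have ht0 : 0 < -b / s := div_pos (neg_pos.mpr hb) hs
  have hγpos : 0 < γ₃ := hγ₃ ▸ Real.arcsin_pos.mpr ht0
  have hγlt : γ₃ < π / 2 := hγ₃ ▸ Real.arcsin_lt_pi_div_two.mpr htlt1
  have hsinγ : Real.sin γ₃ = -b / s := hγ₃ ▸ Real.sin_arcsin (by linarith) htlt1.le
  have hθ₀2α : θ₀ < 2 * α - π := lt_of_lt_of_le hθ₀lt (min_le_left _ _)
  have hx1 : π / 2 < θ / 2 + α := by linarith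
  have hx2 : θ / 2 + α < π - γ₃ := by linarith
  have hkey1 : 0 < s * u + b := by
    have hsy : Real.sin γ₃ < Real.sin (π - (θ / 2 + α)) := by
      apply Real.strictMonoOn_sin (by constructor <;> [linarith [pi_pos]; linarith])
        (by constructor <;> linarith) (by linarith)
    rw [Real.sin_pi_sub, hsinγ, ← hu_def] at hsy
    have := (div_lt_iff₀ hs).mp hsy
    linarith
  have hkey2 : 0 < s + b * u := by
    have h2 := Real.sin_le_one (θ / 2 + α)
    rw [← hu_def] at h2
    nlinarith
  clear_value u v r s
  clear hf hdf hg gpos hnum hden hsin hcos hC hθ₀lt hθ2 hγ₃ hsinγ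
  have heq : 2 * b * s * (-u * (1 / 2) * (1 / 2)) * (2 * r) -
      2 * b * s * (v * (1 / 2)) * (2 * (2 * b * s * (v * (1 / 2)) / (2 * r))) =
      (-b) * s * ((s * u + b) * (s + b * u)) * r⁻¹ := by
    have hw : r * r⁻¹ = 1 := mul_inv_cancel₀ hrpos.ne'
    linear_combination (b * s * u * r) * hw + (-(b * s * u) * r⁻¹) * hr2 +
      (b * s * u * r⁻¹) * hs2 + (-(b ^ 2 * s ^ 2) * r⁻¹) * huv
  rw [heq]
  exact div_pos
    (mul_pos (mul_pos (mul_pos (neg_pos.mpr hb) hs) (mul_pos hkey1 hkey2))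
      (inv_pos.mpr hrpos)) (by positivity)
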